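/- Let H be a grounded acyclic B-hypergraph and x a vertex of H, and suppose there exists an assembly pathway for x with finitely many hyperedges. Then the minimum, over all assembly pathways P for x, of the number of hyperedges of P equals the minimum, over all assembly pathways P for x, of the number of vertices of P that are not minimal vertices of P. -/

import Mathlib

/-- A directed hypergraph on a vertex type `V`: a set of vertices together with a set of
hyperedges, each hyperedge being a pair `(E⁻, E⁺)` of finite sets of vertices
(its tail and head), all of whose vertices belong to the vertex set. -/
structure DirectedHypergraph (V : Type*) where
  verts : Set V
  edges : Set (Finset V × Finset V)
  wf_tail : ∀ E ∈ edges, ∀ v ∈ E.1, v ∈ verts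
  wf_head : ∀ E ∈ edges, ∀ v ∈ E.2, v ∈ verts

namespace DirectedHypergraph

variable {V : Type*}

/-- The one-step relation: `x` is in the tail and `y` in the head of a common hyperedge. -/
def OneStep (H : DirectedHypergraph V) (x y : V) : Prop :=
  ∃ E ∈ H.edges, x ∈ E.1 ∧ y ∈ E.2

/-- Reachability: the reflexive-transitive closure of the one-step relation. -/
def Reach (H : DirectedHypergraph V) : V → V → Prop :=
  Relation.ReflTransGen H.OneStep

/-- Acyclicity: the transitive closure of the one-step relation is irreflexive. -/
def Acyclic (H : DirectedHypergraph V) : Prop :=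
  ∀ x : V, ¬ Relation.TransGen H.OneStep x x

/-- A vertex `z` is minimal if `y ≤ z` implies `y = z`. -/
def MinimalVert (H : DirectedHypergraph V) (z : V) : Prop :=
  z ∈ H.verts ∧ ∀ y : V, H.Reach y z → y = z

/-- `H` is grounded if below every vertex there is a minimal vertex. -/
def Grounded (H : DirectedHypergraph V) : Prop :=
  ∀ x ∈ H.verts, ∃ z : V, H.MinimalVert z ∧ H.Reach z x

/-- `H'` is a subhypergraph of `H`. -/
def Subhypergraph (H' H : DirectedHypergraph V) : Prop :=
  H'.verts ⊆ H.verts ∧ H'.edges ⊆ H.edges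

/-- `H` is a B-hypergraph: every head is a singleton. -/
def IsB (H : DirectedHypergraph V) : Prop :=
  ∀ E ∈ H.edges, ∃ y : V, E.2 = {y}

end DirectedHypergraph

namespace DirectedHypergraph

variable {V : Type*}

/-- `P` is rooted in `H`: `P` is a grounded subhypergraph of `H` and every minimal vertex
of `P` is a minimal vertex of `H`. -/
def RootedIn (P H : DirectedHypergraph V) : Prop :=
  P.Subhypergraph H ∧ P.Grounded ∧ ∀ z : V, P.MinimalVert z → H.MinimalVert z

/-- An assembly pathway for `x`: a subhypergraph `P` of `H` containing `x` that is rooted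
in `H` and such that every vertex in the tail of a hyperedge of `P` reaches `x` within `P`. -/
def IsAssemblyPathway (H : DirectedHypergraph V) (x : V) (P : DirectedHypergraph V) : Prop :=
  x ∈ P.verts ∧ P.RootedIn H ∧ ∀ E ∈ P.edges, ∀ z ∈ E.1, P.Reach z x

end DirectedHypergraph

namespace DirectedHypergraph

variable {V : Type*}

lemma aux_reach_mono {P Q : DirectedHypergraph V} (h : P.edges ⊆ Q.edges) {a b : V}
    (hr : P.Reach a b) : Q.Reach a b :=
  Relation.ReflTransGen.mono (r := P.OneStep) (p := Q.OneStep)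
    (fun x y ⟨E, hE, hx, hy⟩ => ⟨E, h hE, hx, hy⟩) a b hr

/-- Every non-minimal vertex is the head of some edge (with nonempty tail). -/
lemma aux_nonmin_head {P : DirectedHypergraph V} {v : V} (hv : v ∈ P.verts)
    (hnm : ¬ P.MinimalVert v) : ∃ E ∈ P.edges, v ∈ E.2 ∧ E.1.Nonempty := by
  rw [MinimalVert, not_and] at hnm
  push_neg at hnm
  obtain ⟨y, hy, hne⟩ := hnm hv
  rcases Relation.ReflTransGen.cases_tail hy with h | ⟨c, _, E, hE, hcE, hvE⟩
  · exact absurd h.symm hne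
  · exact ⟨E, hE, hvE, ⟨c, hcE⟩⟩

/-- Easy direction: non-minimal vertices are no more numerous than edges. -/
lemma aux_nonmin_le_edges (P : DirectedHypergraph V) (hfin : P.edges.Finite)
    (hBP : ∀ E ∈ P.edges, ∃ y : V, E.2 = {y}) :
    {v ∈ P.verts | ¬ P.MinimalVert v}.ncard ≤ P.edges.ncard := by
  set nm := {v ∈ P.verts | ¬ P.MinimalVert v} with hnmdef
  have key : ∀ v ∈ nm, ∃ E ∈ P.edges, E.2 = {v} := by
    rintro v ⟨hv, hnm⟩
    obtain ⟨E, hE, hvE, -⟩ := aux_nonmin_head hv hnm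
    obtain ⟨y, hy⟩ := hBP E hE
    rw [hy, Finset.mem_singleton] at hvE
    exact ⟨E, hE, by rw [hy, hvE]⟩
  choose! f hf1 hf2 using key
  have hinj : Set.InjOn f nm := by
    intro a ha b hb hab
    have : ({a} : Finset V) = {b} := by rw [← hf2 a ha, ← hf2 b hb, hab]
    simpa using this
  calc nm.ncard = (f '' nm).ncard := (Set.ncard_image_of_injOn hinj).symm
    _ ≤ P.edges.ncard := by
        refine Set.ncard_le_ncard ?_ hfin
        rintro E ⟨v, hv, rfl⟩
        exact hf1 v hv

/-- Hard direction: from any finite assembly pathway we can extract one whose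
number of edges is at most the number of non-minimal vertices. -/
lemma aux_exists_small (H : DirectedHypergraph V) (ha : H.Acyclic) (hB : H.IsB)
    (x : V) (P : DirectedHypergraph V) (hP : H.IsAssemblyPathway x P)
    (hfin : P.edges.Finite) :
    ∃ P' : DirectedHypergraph V, H.IsAssemblyPathway x P' ∧ P'.edges.Finite ∧
      P'.edges.ncard ≤ {v ∈ P.verts | ¬ P.MinimalVert v}.ncard := by
  obtain ⟨hx, ⟨hsub, hgr, hroot⟩, htail⟩ := hP
  set nm := {v ∈ P.verts | ¬ P.MinimalVert v} with hnmdef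
  have nmfin : nm.Finite := by
    have : nm ⊆ ⋃ E ∈ P.edges, (E.2 : Set V) := by
      rintro v ⟨hv, hnm⟩
      obtain ⟨E, hE, hvE, -⟩ := aux_nonmin_head hv hnm
      exact Set.mem_biUnion hE hvE
    exact ((hfin.biUnion (fun E _ => E.2.finite_toSet)).subset this)
  have key : ∀ v ∈ nm, ∃ E, E ∈ P.edges ∧ v ∈ E.2 ∧ E.1.Nonempty := by
    rintro v ⟨hv, hnm⟩
    obtain ⟨E, hE, h1, h2⟩ := aux_nonmin_head hv hnm
    exact ⟨E, hE, h1, h2⟩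
  choose! e heP hehead hetail using key
  have hhead : ∀ v ∈ nm, (e v).2 = {v} := by
    intro v hv
    obtain ⟨y, hy⟩ := hB (e v) (hsub.2 (heP v hv))
    have := hehead v hv
    rw [hy, Finset.mem_singleton] at this
    rw [hy, this]
  -- the relation generating the "needed" vertices, going down from x
  set r : V → V → Prop := fun v w => w ∈ (e v).1 ∧ w ∈ nm with hrdef
  set N : Set V := {w | x ∈ nm ∧ Relation.ReflTransGen r x w} with hNdef
  have hNnm : N ⊆ nm := by
    rintro w ⟨hxnm, hw⟩
    induction hw with
    | refl => exact hxnm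
    | tail _ hbc _ => exact hbc.2
  set P' : DirectedHypergraph V :=
    { verts := insert x {w | ∃ v ∈ N, w ∈ (e v).1 ∨ w ∈ (e v).2}
      edges := e '' N
      wf_tail := by
        rintro E ⟨v, hv, rfl⟩ w hw
        exact Set.mem_insert_iff.mpr (Or.inr ⟨v, hv, Or.inl hw⟩)
      wf_head := by
        rintro E ⟨v, hv, rfl⟩ w hw
        exact Set.mem_insert_iff.mpr (Or.inr ⟨v, hv, Or.inr hw⟩) } with hP'def
  have hvsub : P'.verts ⊆ P.verts := by
    intro w hw
    rcases Set.mem_insert_iff.mp hw with rfl | ⟨v, hv, h | h⟩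
    · exact hx
    · exact P.wf_tail (e v) (heP v (hNnm hv)) w h
    · exact P.wf_head (e v) (heP v (hNnm hv)) w h
  have hesub : P'.edges ⊆ P.edges := by
    rintro E ⟨v, hv, rfl⟩; exact heP v (hNnm hv)
  have hstep : ∀ a b : V, P'.OneStep a b → P.OneStep a b := by
    rintro a b ⟨E, hE, h1, h2⟩; exact ⟨E, hesub hE, h1, h2⟩
  have hstepH : ∀ a b : V, P'.OneStep a b → H.OneStep a b := by
    rintro a b ⟨E, hE, h1, h2⟩; exact ⟨E, hsub.2 (hesub hE), h1, h2⟩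
  have hirr : ∀ a : V, ¬ Relation.TransGen P'.OneStep a a := by
    intro a h
    exact ha a (Relation.TransGen.mono hstepH a a h)
  -- each needed vertex has an incoming edge inside P'
  have hin : ∀ v ∈ N, ∀ y ∈ (e v).1, P'.OneStep y v := by
    intro v hv y hy
    refine ⟨e v, ⟨v, hv, rfl⟩, hy, ?_⟩
    rw [hhead v (hNnm hv)]
    exact Finset.mem_singleton_self v
  -- every non-P-minimal vertex of P' is needed
  have hN5 : ∀ w ∈ P'.verts, ¬ P.MinimalVert w → w ∈ N := by
    intro w hw hnm
    rcases Set.mem_insert_iff.mp hw with rfl | ⟨v, hv, h | h⟩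
    · exact ⟨⟨hx, hnm⟩, Relation.ReflTransGen.refl⟩
    · exact ⟨hv.1, hv.2.tail ⟨h, hvsub hw, hnm⟩⟩
    · have := hhead v (hNnm hv)
      rw [this, Finset.mem_singleton] at h
      rw [h]; exact hv
  have hmin' : ∀ z ∈ P'.verts, P.MinimalVert z → P'.MinimalVert z := by
    intro z hz hm
    exact ⟨hz, fun y hy => hm.2 y (aux_reach_mono hesub hy)⟩
  -- groundedness of P' by induction on a finite measure
  have hground : P'.Grounded := by
    have main : ∀ n : ℕ, ∀ v ∈ P'.verts,
        (nm ∩ {w | P'.Reach w v}).ncard = n →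
        ∃ z, P'.MinimalVert z ∧ P'.Reach z v := by
      intro n
      induction n using Nat.strong_induction_on with
      | _ n ih =>
        intro v hv hm
        by_cases hmv : P.MinimalVert v
        · exact ⟨v, hmin' v hv hmv, Relation.ReflTransGen.refl⟩
        · have hvN : v ∈ N := hN5 v hv hmv
          obtain ⟨y, hy⟩ := hetail v (hNnm hvN)
          have hyv : P'.OneStep y v := hin v hvN y hy
          have hyverts : y ∈ P'.verts :=
            Set.mem_insert_iff.mpr (Or.inr ⟨v, hvN, Or.inl hy⟩)
          have hss : (nm ∩ {w | P'.Reach w y}) ⊂ (nm ∩ {w | P'.Reach w v}) := by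
            constructor
            · rintro w ⟨hw1, hw2⟩
              exact ⟨hw1, Relation.ReflTransGen.tail hw2 hyv⟩
            · intro hcon
              have hvmem : v ∈ nm ∩ {w | P'.Reach w v} :=
                ⟨⟨hvsub hv, hmv⟩, Relation.ReflTransGen.refl⟩
              have := (hcon hvmem).2
              exact hirr v (Relation.TransGen.tail' this hyv)
          have hlt : (nm ∩ {w | P'.Reach w y}).ncard < n := by
            rw [← hm]
            exact Set.ncard_lt_ncard hss (nmfin.inter_of_left _)
          obtain ⟨z, hz1, hz2⟩ := ih _ hlt y hyverts rfl
          exact ⟨z, hz1, Relation.ReflTransGen.tail hz2 hyv⟩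
    intro v hv
    exact main _ v hv rfl
  -- every needed vertex reaches x in P'
  have hNx : ∀ v ∈ N, P'.Reach v x := by
    rintro v ⟨hxnm, hrtg⟩
    induction hrtg with
    | refl => exact Relation.ReflTransGen.refl
    | tail hab hbc ih =>
      exact Relation.ReflTransGen.head (hin _ ⟨hxnm, hab⟩ _ hbc.1) ih
  refine ⟨P', ⟨Set.mem_insert x _, ⟨⟨hvsub.trans hsub.1, hesub.trans hsub.2⟩,
    hground, ?_⟩, ?_⟩, ?_, ?_⟩
  · -- rootedness
    intro z hz
    by_cases h : P.MinimalVert z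
    · exact hroot z h
    · exfalso
      have hzN : z ∈ N := hN5 z hz.1 h
      obtain ⟨y, hy⟩ := hetail z (hNnm hzN)
      have hyz : P'.OneStep y z := hin z hzN y hy
      have := hz.2 y (Relation.ReflTransGen.single hyz)
      rw [this] at hyz
      exact hirr z (Relation.TransGen.single hyz)
  · -- tails reach x
    rintro E ⟨v, hv, rfl⟩ w hw
    exact Relation.ReflTransGen.head (hin v hv w hw) (hNx v hv)
  · exact (nmfin.subset hNnm).image e
  · calc (e '' N).ncard ≤ N.ncard := Set.ncard_image_le (nmfin.subset hNnm)
      _ ≤ nm.ncard := Set.ncard_le_ncard hNnm nmfin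

end DirectedHypergraph

open DirectedHypergraph in
/-- In a grounded acyclic B-hypergraph, provided some assembly pathway for `x`
with finitely many hyperedges exists, the minimum number of hyperedges over assembly
pathways for `x` equals the minimum number of non-minimal vertices over assembly
pathways for `x`. -/
theorem assembly_index_edges_eq_verts {V : Type*} (H : DirectedHypergraph V)
    (hg : H.Grounded) (ha : H.Acyclic) (hB : H.IsB) (x : V)
    (hex : ∃ P : DirectedHypergraph V, H.IsAssemblyPathway x P ∧ P.edges.Finite) :
    sInf {n : ℕ | ∃ P : DirectedHypergraph V,
        H.IsAssemblyPathway x P ∧ P.edges.Finite ∧ P.edges.ncard = n} =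
      sInf {n : ℕ | ∃ P : DirectedHypergraph V,
        H.IsAssemblyPathway x P ∧ P.edges.Finite ∧
          {v ∈ P.verts | ¬ P.MinimalVert v}.ncard = n} := by
  set S := {n : ℕ | ∃ P : DirectedHypergraph V,
      H.IsAssemblyPathway x P ∧ P.edges.Finite ∧ P.edges.ncard = n} with hSdef
  set T := {n : ℕ | ∃ P : DirectedHypergraph V,
      H.IsAssemblyPathway x P ∧ P.edges.Finite ∧
        {v ∈ P.verts | ¬ P.MinimalVert v}.ncard = n} with hTdef
  obtain ⟨P₀, hP₀, hfin₀⟩ := hex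
  have hSne : S.Nonempty := ⟨P₀.edges.ncard, P₀, hP₀, hfin₀, rfl⟩
  have hTne : T.Nonempty := ⟨_, P₀, hP₀, hfin₀, rfl⟩
  apply le_antisymm
  · -- sInf S ≤ sInf T : use the extraction lemma
    obtain ⟨P₁, hP₁, hfin₁, hcard₁⟩ := Nat.sInf_mem hTne
    obtain ⟨P', hP', hfin', hle'⟩ := aux_exists_small H ha hB x P₁ hP₁ hfin₁
    calc sInf S ≤ P'.edges.ncard := Nat.sInf_le ⟨P', hP', hfin', rfl⟩
      _ ≤ sInf T := hcard₁ ▸ hle'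
  · -- sInf T ≤ sInf S : non-minimal vertices are at most edges
    obtain ⟨P₁, hP₁, hfin₁, hcard₁⟩ := Nat.sInf_mem hSne
    have hBP : ∀ E ∈ P₁.edges, ∃ y : V, E.2 = {y} :=
      fun E hE => hB E (hP₁.2.1.1.2 hE)
    calc sInf T ≤ {v ∈ P₁.verts | ¬ P₁.MinimalVert v}.ncard :=
          Nat.sInf_le ⟨P₁, hP₁, hfin₁, rfl⟩
      _ ≤ P₁.edges.ncard := aux_nonmin_le_edges P₁ hfin₁ hBP
      _ = sInf S := hcard₁
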